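/- arXiv:1901.06336 — 3 statements merged into one kernel-verified Lean document; each statement's English description precedes it below -/
import Mathlib

section
/- Let F be a field, B_0 a subgroup of the multiplicative group Fˣ, and r, l ≥ 1. For each j ∈ {1,…,r} let σ_j ∈ Fˣ, with σ_1 B_0, …, σ_r B_0 pairwise distinct cosets of B_0, and let d_{j,b} ∈ B_0 for b ∈ {1,…,l}. Then the rl × rl matrix over F, with rows indexed by pairs (t, b') for t ∈ {0,…,r−1}, b' ∈ {1,…,l} and columns indexed by pairs (j, b) for j ∈ {1,…,r}, b ∈ {1,…,l}, whose entry at ((t,b'),(j,b)) equals (σ_j d_{j,b})^t if b' = b and equals 0 otherwise, is invertible. -/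
open scoped Pointwise

/-- Theorem 1 (the ε-MSCR code is vector MDS): if `σ_1, …, σ_r ∈ Fˣ` lie in pairwise distinct
cosets of a subgroup `B₀ ≤ Fˣ` and all the diagonal entries `d_{j,b}` belong to `B₀`, then the
`rl × rl` matrix with entry `(σ_j d_{j,b})^t` at `((t,b'),(j,b))` when `b' = b` and `0` otherwise
is invertible. -/
theorem emscr_block_vandermonde_isUnit {F : Type*} [Field F] (B₀ : Subgroup Fˣ)
    (r l : ℕ) (hr : 1 ≤ r) (hl : 1 ≤ l)
    (σ : Fin r → Fˣ) (hσ : ∀ j j' : Fin r, j ≠ j' → σ j • (B₀ : Set Fˣ) ≠ σ j' • (B₀ : Set Fˣ))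
    (d : Fin r → Fin l → Fˣ) (hd : ∀ j b, d j b ∈ B₀) :
    IsUnit (Matrix.of (fun (p : Fin r × Fin l) (q : Fin r × Fin l) =>
      if p.2 = q.2 then (((σ q.1 * d q.1 q.2 : Fˣ) : F)) ^ (p.1 : ℕ) else (0 : F))) := by
  classical
  have hM : (Matrix.of (fun (p : Fin r × Fin l) (q : Fin r × Fin l) =>
      if p.2 = q.2 then (((σ q.1 * d q.1 q.2 : Fˣ) : F)) ^ (p.1 : ℕ) else (0 : F))) =
      Matrix.blockDiagonal (fun b : Fin l =>
        Matrix.transpose (Matrix.vandermonde (fun j : Fin r => ((σ j * d j b : Fˣ) : F)))) := by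
    ext ⟨t, b'⟩ ⟨j, b⟩
    simp only [Matrix.of_apply, Matrix.blockDiagonal_apply, Matrix.transpose_apply,
      Matrix.vandermonde_apply]
    split_ifs with h
    · subst h; rfl
    · rfl
  rw [hM, Matrix.isUnit_iff_isUnit_det, Matrix.det_blockDiagonal, isUnit_iff_ne_zero,
    Finset.prod_ne_zero_iff]
  intro b _
  rw [Matrix.det_transpose, Matrix.det_vandermonde_ne_zero_iff]
  intro j j' hjj'
  by_contra hne
  have hu : σ j * d j b = σ j' * d j' b := Units.ext hjj'
  apply hσ j j' hne
  have heq : (σ j)⁻¹ * σ j' = d j b * (d j' b)⁻¹ := by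
    have h2 : σ j' = σ j * d j b * (d j' b)⁻¹ := by rw [hu]; group
    rw [h2]; group
  have hmem : (σ j)⁻¹ * σ j' ∈ B₀ := by
    rw [heq]; exact B₀.mul_mem (hd j b) (B₀.inv_mem (hd j' b))
  have hsm : ∀ u y : Fˣ, u • y = u * y := fun u y =>
    Units.ext rfl
  ext x
  simp only [Set.mem_smul_set, SetLike.mem_coe]
  constructor
  · rintro ⟨y, hy, rfl⟩
    refine ⟨((σ j)⁻¹ * σ j')⁻¹ * y, B₀.mul_mem (B₀.inv_mem hmem) hy, ?_⟩
    simp only [hsm]; group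
  · rintro ⟨y, hy, rfl⟩
    refine ⟨(σ j)⁻¹ * σ j' * y, B₀.mul_mem hmem hy, ?_⟩
    simp only [hsm]; group
end

section
/- Let F be a finite alphabet, N and D natural numbers with D ≤ N, l a positive real number, and let a_1, a_2, a_3 : {1,…,N} → F be words with a_3(j) ≠ a_1(j) whenever a_1(j) = a_2(j). Let 𝒫 be a finite index set and for each i ∈ 𝒫 let a_i : {1,…,N} → F be a word whose Hamming distance to a_1 is at least D and whose Hamming distance to a_2 is at least D. Then |{j : a_1(j) ≠ a_2(j)}|·(2l/3) + |{j : a_1(j) = a_2(j)}|·l + Σ_{i∈𝒫} ( |{j : a_1(j) ≠ a_2(j), a_i(j) = a_1(j)}|·l + |{j : a_1(j) ≠ a_2(j), a_i(j) = a_2(j)}|·l + |{j : a_1(j) ≠ a_2(j), a_i(j) ≠ a_1(j), a_i(j) ≠ a_2(j)}|·(2l/3) + |{j : a_1(j) = a_2(j), a_i(j) = a_1(j)}|·l + |{j : a_1(j) = a_2(j), a_i(j) = a_3(j)}|·(2l/3) + |{j : a_1(j) = a_2(j), a_i(j) ≠ a_1(j), a_i(j) ≠ a_3(j)}|·(2l/3)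 ) ≤ N·l + |𝒫|·(4Nl/3 − 2Dl/3). -/
open Finset

/-- The chain of inequalities (26)–(31): the upper bound on the total repair bandwidth of the
ε-MSCR code is at most `N·l + |𝒫|·(4Nl/3 − 2Dl/3)`. -/
theorem repair_bandwidth_bound {F : Type*} [Fintype F] [DecidableEq F] {ι : Type*}
    (N D : ℕ) (hDN : D ≤ N) (l : ℝ) (hl : 0 < l)
    (a1 a2 a3 : Fin N → F) (h3 : ∀ j, a1 j = a2 j → a3 j ≠ a1 j)
    (P : Finset ι) (a : ι → Fin N → F)
    (hd1 : ∀ i ∈ P, D ≤ hammingDist (a i) a1)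
    (hd2 : ∀ i ∈ P, D ≤ hammingDist (a i) a2) :
    ((univ.filter (fun j : Fin N => a1 j ≠ a2 j)).card : ℝ) * (2 * l / 3) +
      ((univ.filter (fun j : Fin N => a1 j = a2 j)).card : ℝ) * l +
      ∑ i ∈ P,
        (((univ.filter (fun j : Fin N => a1 j ≠ a2 j ∧ a i j = a1 j)).card : ℝ) * l +
          ((univ.filter (fun j : Fin N => a1 j ≠ a2 j ∧ a i j = a2 j)).card : ℝ) * l +
          ((univ.filter (fun j : Fin N =>
              a1 j ≠ a2 j ∧ a i j ≠ a1 j ∧ a i j ≠ a2 j)).card : ℝ) * (2 * l / 3) +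
          ((univ.filter (fun j : Fin N => a1 j = a2 j ∧ a i j = a1 j)).card : ℝ) * l +
          ((univ.filter (fun j : Fin N => a1 j = a2 j ∧ a i j = a3 j)).card : ℝ) * (2 * l / 3) +
          ((univ.filter (fun j : Fin N =>
              a1 j = a2 j ∧ a i j ≠ a1 j ∧ a i j ≠ a3 j)).card : ℝ) * (2 * l / 3)) ≤
      (N : ℝ) * l + (P.card : ℝ) * (4 * N * l / 3 - 2 * D * l / 3) := by
  classical
  -- |A| + |B| = N
  have hAB : (univ.filter (fun j : Fin N => a1 j ≠ a2 j)).card +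
      (univ.filter (fun j : Fin N => a1 j = a2 j)).card = N := by
    have h := Finset.card_filter_add_card_filter_not
      (s := (univ : Finset (Fin N))) (p := fun j => a1 j ≠ a2 j)
    simpa [not_not] using h
  -- first two terms ≤ N·l
  have h1 : ((univ.filter (fun j : Fin N => a1 j ≠ a2 j)).card : ℝ) * (2 * l / 3) +
      ((univ.filter (fun j : Fin N => a1 j = a2 j)).card : ℝ) * l ≤ (N : ℝ) * l := by
    have hA : ((univ.filter (fun j : Fin N => a1 j ≠ a2 j)).card : ℝ) +
        ((univ.filter (fun j : Fin N => a1 j = a2 j)).card : ℝ) = (N : ℝ) := by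
      exact_mod_cast hAB
    have hpos : (0:ℝ) ≤ ((univ.filter (fun j : Fin N => a1 j ≠ a2 j)).card : ℝ) := by
      positivity
    nlinarith
  -- per-i bound
  have hsum : ∀ i ∈ P,
      (((univ.filter (fun j : Fin N => a1 j ≠ a2 j ∧ a i j = a1 j)).card : ℝ) * l +
          ((univ.filter (fun j : Fin N => a1 j ≠ a2 j ∧ a i j = a2 j)).card : ℝ) * l +
          ((univ.filter (fun j : Fin N =>
              a1 j ≠ a2 j ∧ a i j ≠ a1 j ∧ a i j ≠ a2 j)).card : ℝ) * (2 * l / 3) +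
          ((univ.filter (fun j : Fin N => a1 j = a2 j ∧ a i j = a1 j)).card : ℝ) * l +
          ((univ.filter (fun j : Fin N => a1 j = a2 j ∧ a i j = a3 j)).card : ℝ) * (2 * l / 3) +
          ((univ.filter (fun j : Fin N =>
              a1 j = a2 j ∧ a i j ≠ a1 j ∧ a i j ≠ a3 j)).card : ℝ) * (2 * l / 3)) ≤
        4 * N * l / 3 - 2 * D * l / 3 := by
    intro i hi
    set c1 := (univ.filter (fun j : Fin N => a1 j ≠ a2 j ∧ a i j = a1 j)).card with hc1
    set c2 := (univ.filter (fun j : Fin N => a1 j ≠ a2 j ∧ a i j = a2 j)).card with hc2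
    set c3 := (univ.filter (fun j : Fin N =>
        a1 j ≠ a2 j ∧ a i j ≠ a1 j ∧ a i j ≠ a2 j)).card with hc3
    set d1 := (univ.filter (fun j : Fin N => a1 j = a2 j ∧ a i j = a1 j)).card with hd1'
    set d2 := (univ.filter (fun j : Fin N => a1 j = a2 j ∧ a i j = a3 j)).card with hd2'
    set d3 := (univ.filter (fun j : Fin N =>
        a1 j = a2 j ∧ a i j ≠ a1 j ∧ a i j ≠ a3 j)).card with hd3'
    -- total = N
    have htot : c1 + c2 + c3 + d1 + d2 + d3 = N := by
      rw [hc1, hc2, hc3, hd1', hd2', hd3']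
      simp only [Finset.card_filter, ← Finset.sum_add_distrib]
      have hone : (∑ j : Fin N,
          ((((((if a1 j ≠ a2 j ∧ a i j = a1 j then 1 else 0) +
            if a1 j ≠ a2 j ∧ a i j = a2 j then 1 else 0) +
            if a1 j ≠ a2 j ∧ a i j ≠ a1 j ∧ a i j ≠ a2 j then 1 else 0) +
            if a1 j = a2 j ∧ a i j = a1 j then 1 else 0) +
            if a1 j = a2 j ∧ a i j = a3 j then 1 else 0) +
            if a1 j = a2 j ∧ a i j ≠ a1 j ∧ a i j ≠ a3 j then 1 else 0)) =
          ∑ _j : Fin N, (1 : ℕ) := by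
        refine Finset.sum_congr rfl fun j _ => ?_
        have h31 := h3 j
        by_cases h12 : a1 j = a2 j <;> by_cases hA : a i j = a1 j <;>
          by_cases hB2 : a i j = a2 j <;> by_cases hB3 : a i j = a3 j <;>
          simp_all
      rw [hone]; simp
    -- c1 + d1 = # {a i = a1}
    have he1 : c1 + d1 = (univ.filter (fun j : Fin N => a i j = a1 j)).card := by
      rw [hc1, hd1']
      simp only [Finset.card_filter, ← Finset.sum_add_distrib]
      refine Finset.sum_congr rfl fun j _ => ?_
      by_cases h12 : a1 j = a2 j <;> by_cases hA : a i j = a1 j <;> simp [h12, hA]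
    have hcompl : ∀ b : Fin N → F, (univ.filter (fun j : Fin N => a i j = b j)).card +
        hammingDist (a i) b = N := by
      intro b
      have h := Finset.card_filter_add_card_filter_not
        (s := (univ : Finset (Fin N))) (p := fun j => a i j = b j)
      simpa [hammingDist] using h
    -- bound c1 + d1
    have hb1 : (c1 : ℝ) + d1 ≤ (N : ℝ) - D := by
      have h1' := hcompl a1
      rw [← he1] at h1'
      have hD : (D : ℝ) ≤ (hammingDist (a i) a1 : ℝ) := by exact_mod_cast hd1 i hi
      have h1'' : (c1 : ℝ) + d1 + (hammingDist (a i) a1 : ℝ) = N := by exact_mod_cast h1'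
      linarith
    have hb2 : (c2 : ℝ) ≤ (N : ℝ) - D := by
      have hsub : c2 ≤ (univ.filter (fun j : Fin N => a i j = a2 j)).card := by
        apply Finset.card_le_card
        intro j hj
        simp only [Finset.mem_filter] at *
        exact ⟨hj.1, hj.2.2⟩
      have h2' := hcompl a2
      have hD : (D : ℝ) ≤ (hammingDist (a i) a2 : ℝ) := by exact_mod_cast hd2 i hi
      have h2'' : ((univ.filter (fun j : Fin N => a i j = a2 j)).card : ℝ) +
          (hammingDist (a i) a2 : ℝ) = N := by exact_mod_cast h2'
      have hsub' : (c2 : ℝ) ≤ ((univ.filter (fun j : Fin N => a i j = a2 j)).card : ℝ) := by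
        exact_mod_cast hsub
      linarith
    have htot' : (c1 : ℝ) + c2 + c3 + d1 + d2 + d3 = N := by exact_mod_cast htot
    have hn1 : (0:ℝ) ≤ (c3 : ℝ) := by positivity
    have hn2 : (0:ℝ) ≤ (d2 : ℝ) := by positivity
    have hn3 : (0:ℝ) ≤ (d3 : ℝ) := by positivity
    nlinarith
  refine le_trans (add_le_add h1 (Finset.sum_le_sum hsum)) ?_
  rw [Finset.sum_const, nsmul_eq_mul]
end

section
/- Let N, l, r be positive real numbers and δ, P, M real numbers with P ≥ 0, δ ≤ 2, P ≤ M − 2, and P − (M − r) + 2 > 0. Then N·l + P·(4Nl/3 − 2δNl/3) ≤ ( (r/(P+1))·(1/2 + (2−δ)·P/3) ) · ( 2(P+1)·N·l / (P − (M − r) + 2) ). -/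
/-- The arithmetic core of the repair bandwidth theorem: the upper bound on the total repair
bandwidth is at most `(1 + ε₂)` times the optimal cooperative repair bandwidth. -/
theorem repair_bandwidth_le_factor_times_optimal (N l r δ P M : ℝ)
    (hN : 0 < N) (hl : 0 < l) (hr : 0 < r) (hP : 0 ≤ P) (hδ : δ ≤ 2)
    (hPM : P ≤ M - 2) (hpos : P - (M - r) + 2 > 0) :
    N * l + P * (4 * N * l / 3 - 2 * δ * N * l / 3) ≤
      ((r / (P + 1)) * (1 / 2 + (2 - δ) * P / 3)) *
        (2 * (P + 1) * N * l / (P - (M - r) + 2)) := by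
  have hP1 : (0:ℝ) < P + 1 := by linarith
  have hsr : P - (M - r) + 2 ≤ r := by linarith
  have hfac : (0:ℝ) ≤ 1 / 2 + (2 - δ) * P / 3 := by nlinarith
  have hNl : 0 < N * l := mul_pos hN hl
  have key : N * l + P * (4 * N * l / 3 - 2 * δ * N * l / 3)
      = (1 / 2 + (2 - δ) * P / 3) * (2 * N * l) := by ring
  rw [key]
  have hrhs : r / (P + 1) * (1 / 2 + (2 - δ) * P / 3) * (2 * (P + 1) * N * l / (P - (M - r) + 2))
      = (1 / 2 + (2 - δ) * P / 3) * (2 * N * l) * (r / (P - (M - r) + 2)) := by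
    field_simp
  rw [hrhs]
  have h1 : (1:ℝ) ≤ r / (P - (M - r) + 2) := (one_le_div hpos).mpr hsr
  nlinarith [mul_nonneg hfac (le_of_lt hNl)]
end
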